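/- Let f : A* → B* be a partial function computed by a k-marble transducer. Then |f(w)| = O(|w|^{k+1}). -/

import Mathlib

set_option autoImplicit false

/-! ### Asymptotic growth of functions `A* → ℕ` -/

/-- `g` has `k`-polynomial growth: `g(w) = O(|w|^k)` and there is an infinite set `L`
of words on which `g(w) = Ω(|w|^k)`. -/
def PolyGrowth {A : Type} (g : List A → ℕ) (k : ℕ) : Prop :=
  (∃ C : ℕ, ∀ w, g w ≤ C * w.length ^ k + C) ∧
  (∃ L : Set (List A), L.Infinite ∧ ∃ c : ℕ, 0 < c ∧ ∀ w ∈ L, w.length ^ k ≤ c * g w)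

/-- `g` has exponential growth: `g(w) = 2^{O(|w|)}` and there is an infinite set `L`
of words on which `g(w) = 2^{Ω(|w|)}`. -/
def ExpGrowth {A : Type} (g : List A → ℕ) : Prop :=
  (∃ C : ℕ, ∀ w, g w ≤ 2 ^ (C * w.length + C)) ∧
  (∃ L : Set (List A), L.Infinite ∧ ∃ c : ℕ, 0 < c ∧ ∀ w ∈ L, 2 ^ w.length ≤ (g w) ^ c)

/-! ### Substitutions -/

/-- Extension of a substitution `s : X → (B ⊎ X)*` to a morphism on `(B ⊎ X)*`
fixing the letters of `B`; this also gives the composition of substitutions,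
`(s₁ ∘ s₂) x = applySubst s₁ (s₂ x)`. -/
def applySubst {B X : Type} (s : X → List (B ⊕ X)) (l : List (B ⊕ X)) : List (B ⊕ X) :=
  l.flatMap (fun c => match c with | Sum.inl b => [Sum.inl b] | Sum.inr x => s x)

/-- Evaluation of a word over `B ⊎ X` under a valuation `v : X → B*` of the registers. -/
def evalSubst {B X : Type} (v : X → List B) (l : List (B ⊕ X)) : List B :=
  l.flatMap (fun c => match c with | Sum.inl b => [b] | Sum.inr x => v x)

/-- Number of occurrences of register `x` in a word over `B ⊎ X`. -/
noncomputable def occCount {B X : Type} (x : X) (l : List (B ⊕ X)) : ℕ :=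
  l.countP (fun c => @decide (c = Sum.inr x) (Classical.propDecidable _))

/-- Total number of occurrences of register `x` in the whole set of words `{s y | y ∈ X}`. -/
noncomputable def totalOcc {B X : Type} [Fintype X] (s : X → List (B ⊕ X)) (x : X) : ℕ :=
  ∑ y : X, occCount x (s y)

/-! ### Streaming string transducers -/

/-- A streaming string transducer (SST) with input alphabet `A` and output alphabet `B`:
finitely many states `Q` with initial state `q0`, finitely many registers `X` with
initial contents `init`, a partial transition/update function (`trans`, returning the
successor state together with the register update substitution, with a common domain),
and a partial output function `out`. -/
structure SST (A B : Type) where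
  Q : Type
  X : Type
  [finQ : Fintype Q]
  [finX : Fintype X]
  q0 : Q
  init : X → List B
  trans : Q → A → Option (Q × (X → List (B ⊕ X)))
  out : Q → Option (List (B ⊕ X))

attribute [instance] SST.finQ SST.finX

/-- Run of an SST from state `q` with current register valuation `v`. -/
def SST.runFrom {A B : Type} (T : SST A B) :
    T.Q → (T.X → List B) → List A → Option (T.Q × (T.X → List B))
  | q, v, [] => some (q, v)
  | q, v, a :: w =>
    match T.trans q a with
    | none => none
    | some (q', s) => T.runFrom q' (fun x => evalSubst v (s x)) w

/-- The (partial) function computed by an SST. -/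
def SST.eval {A B : Type} (T : SST A B) (w : List A) : Option (List B) :=
  (T.runFrom T.q0 T.init w).bind fun p => (T.out p.1).map fun o => evalSubst p.2 o

def SST.Computes {A B : Type} (T : SST A B) (f : List A → Option (List B)) : Prop :=
  ∀ w, T.eval w = f w

/-- An SST is copyless if every update substitution uses each register at most once
in total. -/
def SST.Copyless {A B : Type} (T : SST A B) : Prop :=
  ∀ q a p, T.trans q a = some p → ∀ x : T.X, totalOcc p.2 x ≤ 1

/-- An SST is `k`-layered if its registers can be partitioned into layers
`X_0, …, X_k` such that every update of a register of layer `i` only uses registers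
of layers `≤ i`, and each register of layer `i` is used at most once in total in the
updates of the registers of layer `i`. -/
def SST.IsLayered {A B : Type} (T : SST A B) (k : ℕ) : Prop :=
  ∃ layer : T.X → Fin (k + 1),
    ∀ q a p, T.trans q a = some p →
      (∀ x y, Sum.inr y ∈ p.2 x → layer y ≤ layer x) ∧
      (∀ y : T.X,
        (∑ x ∈ Finset.univ.filter (fun x => layer x = layer y), occCount y (p.2 x)) ≤ 1)

/-- The composed substitution `λ(q, w)` applied along the run reading `w` from state `q`
(together with the state reached). -/
def SST.substFrom {A B : Type} (T : SST A B) :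
    T.Q → List A → Option (T.Q × (T.X → List (B ⊕ T.X)))
  | q, [] => some (q, fun x => [Sum.inr x])
  | q, a :: w =>
    match T.trans q a with
    | none => none
    | some (q', s) => (T.substFrom q' w).map fun p => (p.1, fun x => applySubst s (p.2 x))

/-- An SST is `(k,B)`-bounded if its registers can be partitioned into layers
`X_0, …, X_k` such that every update of a register of layer `i` only uses registers of
layers `≤ i`, and for every state `q` and word `w`, each register of layer `i` occurs
at most `B` times in total in `{λ(q,w)(x) | x ∈ X_i}`. -/
def SST.IsBounded {A B : Type} (T : SST A B) (k Bd : ℕ) : Prop :=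
  ∃ layer : T.X → Fin (k + 1),
    (∀ q a p, T.trans q a = some p → ∀ x y, Sum.inr y ∈ p.2 x → layer y ≤ layer x) ∧
    (∀ q w p, T.substFrom q w = some p →
      ∀ y : T.X,
        (∑ x ∈ Finset.univ.filter (fun x => layer x = layer y), occCount y (p.2 x)) ≤ Bd)

/-! ### Simple SSTs -/

/-- A simple SST: total, a single state (hence no state component), and update
substitutions and output using no letters of `B`. -/
structure SimpleSST (A B : Type) where
  X : Type
  [finX : Fintype X]
  [decX : DecidableEq X]
  init : X → List B
  upd : A → X → List X
  out : List X

attribute [instance] SimpleSST.finX SimpleSST.decX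

/-- Register valuation of a simple SST after reading a word, starting from valuation `v`. -/
def SimpleSST.valFrom {A B : Type} (T : SimpleSST A B) :
    (T.X → List B) → List A → T.X → List B
  | v, [] => v
  | v, a :: w => T.valFrom (fun x => (T.upd a x).flatMap v) w

/-- Register valuation `𝒯^w` of a simple SST after reading `w`. -/
def SimpleSST.val {A B : Type} (T : SimpleSST A B) (w : List A) : T.X → List B :=
  T.valFrom T.init w

/-- The (total) function computed by a simple SST. -/
def SimpleSST.eval {A B : Type} (T : SimpleSST A B) (w : List A) : List B :=
  (T.out).flatMap (T.val w)

/-! ### Two-way transducers -/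

/-- A tape symbol: a letter of `A` or one of the two endmarkers `⊢`, `⊣`. -/
inductive TapeSym (A : Type) where
  | lend
  | rend
  | letter (a : A)

/-- The content of the tape `⊢w⊣` at position `m ∈ {0, …, |w|+1}`. -/
def tapeAt {A : Type} (w : List A) (m : ℕ) : TapeSym A :=
  if m = 0 then TapeSym.lend
  else
    match w[m - 1]? with
    | some a => TapeSym.letter a
    | none => TapeSym.rend

/-- Head moves. -/
inductive Dir where
  | left
  | right

/-- A deterministic two-way transducer: finitely many states with an initial state and
a set of final states, and a partial transition/output function (common domain). -/
structure TwoWayT (A B : Type) where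
  Q : Type
  [finQ : Fintype Q]
  q0 : Q
  final : Set Q
  trans : Q → TapeSym A → Option ((Q × Dir) × List B)

attribute [instance] TwoWayT.finQ

/-- `TwoWayT.Steps T w c v c'`: on input `⊢w⊣` the transducer can go from
configuration `c` to configuration `c'` producing output `v`. -/
inductive TwoWayT.Steps {A B : Type} (T : TwoWayT A B) (w : List A) :
    T.Q × ℕ → List B → T.Q × ℕ → Prop
  | refl (c : T.Q × ℕ) : TwoWayT.Steps T w c [] c
  | stepL {q : T.Q} {m : ℕ} {q' : T.Q} {v u : List B} {cf : T.Q × ℕ} :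
      T.trans q (tapeAt w m) = some ((q', Dir.left), v) → 1 ≤ m →
      TwoWayT.Steps T w (q', m - 1) u cf → TwoWayT.Steps T w (q, m) (v ++ u) cf
  | stepR {q : T.Q} {m : ℕ} {q' : T.Q} {v u : List B} {cf : T.Q × ℕ} :
      T.trans q (tapeAt w m) = some ((q', Dir.right), v) → m ≤ w.length →
      TwoWayT.Steps T w (q', m + 1) u cf → TwoWayT.Steps T w (q, m) (v ++ u) cf

/-- The two-way transducer computes the partial function `f`: `f w = some v` iff there
is an accepting run on `⊢w⊣` (from `(q0, 0)` to `(q, |w|+1)` with `q` final)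
producing `v`. -/
def TwoWayT.Computes {A B : Type} (T : TwoWayT A B) (f : List A → Option (List B)) : Prop :=
  ∀ w v, f w = some v ↔ ∃ q ∈ T.final, TwoWayT.Steps T w (T.q0, 0) v (q, w.length + 1)

/-! ### Marble transducers -/

/-- Actions of a marble transducer: move left, move right, lift the marble, or drop a
marble of color `c`. -/
inductive MAct (C : Type) where
  | left
  | right
  | lift
  | drop (c : C)

/-- A deterministic marble transducer: finitely many states with an initial state and a
set of final states, finitely many marble colors `C`, and a partial transition/output
function (common domain) reading the current state, the tape symbol, and the color of
the marble at the current position (if any); on a position carrying a marble the head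
may only move left or lift the marble. -/
structure MarbleT (A B : Type) where
  Q : Type
  C : Type
  [finQ : Fintype Q]
  [finC : Fintype C]
  q0 : Q
  final : Set Q
  trans : Q → TapeSym A → Option C → Option ((Q × MAct C) × List B)
  marble_left_or_lift : ∀ q s c p, trans q s (some c) = some p →
    p.1.2 = MAct.left ∨ p.1.2 = MAct.lift

attribute [instance] MarbleT.finQ MarbleT.finC

/-- The color of the marble at position `m`, for a stack `π` of dropped marbles
(topmost first, positions strictly increasing from the top and all ≥ the head
position). -/
def marbleAt {C : Type} (m : ℕ) : List (C × ℕ) → Option C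
  | [] => none
  | (c, p) :: _ => if p = m then some c else none

/-- `MarbleT.Steps T w c v c'`: on input `⊢w⊣` the marble transducer can go from
configuration `c` to configuration `c'` producing output `v`. A configuration is a
triple (state, head position, stack of dropped marbles). -/
inductive MarbleT.Steps {A B : Type} (T : MarbleT A B) (w : List A) :
    T.Q × ℕ × List (T.C × ℕ) → List B → T.Q × ℕ × List (T.C × ℕ) → Prop
  | refl (c : T.Q × ℕ × List (T.C × ℕ)) : MarbleT.Steps T w c [] c
  | stepL {q : T.Q} {m : ℕ} {π : List (T.C × ℕ)} {q' : T.Q} {v u : List B}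
      {cf : T.Q × ℕ × List (T.C × ℕ)} :
      T.trans q (tapeAt w m) (marbleAt m π) = some ((q', MAct.left), v) → 1 ≤ m →
      MarbleT.Steps T w (q', m - 1, π) u cf → MarbleT.Steps T w (q, m, π) (v ++ u) cf
  | stepR {q : T.Q} {m : ℕ} {π : List (T.C × ℕ)} {q' : T.Q} {v u : List B}
      {cf : T.Q × ℕ × List (T.C × ℕ)} :
      marbleAt m π = none →
      T.trans q (tapeAt w m) none = some ((q', MAct.right), v) → m ≤ w.length →
      MarbleT.Steps T w (q', m + 1, π) u cf → MarbleT.Steps T w (q, m, π) (v ++ u) cf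
  | stepLift {q : T.Q} {m : ℕ} {π : List (T.C × ℕ)} {q' : T.Q} {cc : T.C} {v u : List B}
      {cf : T.Q × ℕ × List (T.C × ℕ)} :
      T.trans q (tapeAt w m) (some cc) = some ((q', MAct.lift), v) →
      MarbleT.Steps T w (q', m, π) u cf →
      MarbleT.Steps T w (q, m, (cc, m) :: π) (v ++ u) cf
  | stepDrop {q : T.Q} {m : ℕ} {π : List (T.C × ℕ)} {q' : T.Q} {cc : T.C} {v u : List B}
      {cf : T.Q × ℕ × List (T.C × ℕ)} :
      marbleAt m π = none →
      T.trans q (tapeAt w m) none = some ((q', MAct.drop cc), v) →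
      MarbleT.Steps T w (q', m, (cc, m) :: π) u cf →
      MarbleT.Steps T w (q, m, π) (v ++ u) cf

/-- The marble transducer computes the partial function `f`: `f w = some v` iff there is
an accepting run on `⊢w⊣` (from `(q0, 0, ε)` to `(q, |w|+1, ε)` with `q` final)
producing `v`. -/
def MarbleT.Computes {A B : Type} (T : MarbleT A B) (f : List A → Option (List B)) : Prop :=
  ∀ w v, f w = some v ↔
    ∃ q ∈ T.final, MarbleT.Steps T w (T.q0, 0, []) v (q, w.length + 1, [])

/-- A `k`-marble transducer: every configuration reachable from the initial
configuration carries at most `k` marbles. -/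
def MarbleT.IsKMarble {A B : Type} (T : MarbleT A B) (k : ℕ) : Prop :=
  ∀ (w : List A) (u : List B) (cfg : T.Q × ℕ × List (T.C × ℕ)),
    MarbleT.Steps T w (T.q0, 0, []) u cfg → cfg.2.2.length ≤ k

/-- `f` is computable by a `k`-marble transducer. -/
def ComputableKMarble {A B : Type} (f : List A → List B) (k : ℕ) : Prop :=
  ∃ T : MarbleT A B, T.IsKMarble k ∧ T.Computes (fun w => some (f w))

/-! ### Matrices over ℕ and ℕ-automata -/

/-- Product of two square matrices over `ℕ` (given as functions). -/
def matMul {Q : Type} [Fintype Q] (M N : Q → Q → ℕ) : Q → Q → ℕ :=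
  fun i j => ∑ x : Q, M i x * N x j

/-- Identity matrix over `ℕ`. -/
def matId {Q : Type} [DecidableEq Q] : Q → Q → ℕ :=
  fun i j => if i = j then 1 else 0

/-- Row vector times matrix. -/
def vecMat {Q : Type} [Fintype Q] (v : Q → ℕ) (M : Q → Q → ℕ) : Q → ℕ :=
  fun j => ∑ x : Q, v x * M x j

/-- Matrix times column vector. -/
def matVec {Q : Type} [Fintype Q] (M : Q → Q → ℕ) (v : Q → ℕ) : Q → ℕ :=
  fun i => ∑ x : Q, M i x * v x

/-- Dot product of two vectors over `ℕ`. -/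
def dotProd {Q : Type} [Fintype Q] (v w : Q → ℕ) : ℕ :=
  ∑ x : Q, v x * w x

/-- An `ℕ`-automaton: a finite set of states `Q`, an initial row vector `α`, a weight
matrix `μ a` for every letter `a` (extended to words as a monoid morphism `μW`), and a
final column vector `β`. -/
structure NAut (A : Type) where
  Q : Type
  [finQ : Fintype Q]
  [decQ : DecidableEq Q]
  α : Q → ℕ
  μ : A → Q → Q → ℕ
  β : Q → ℕ

attribute [instance] NAut.finQ NAut.decQ

/-- The monoid morphism `A* → ℕ^{Q×Q}` extending `μ`. -/
def NAut.μW {A : Type} (T : NAut A) : List A → T.Q → T.Q → ℕ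
  | [] => matId
  | a :: w => matMul (T.μ a) (T.μW w)

/-- The total function `g : A* → ℕ` computed by the `ℕ`-automaton: `g w = α·μ(w)·β`. -/
def NAut.g {A : Type} (T : NAut A) (w : List A) : ℕ :=
  dotProd (vecMat T.α (T.μW w)) T.β

/-- Trimness: every state is accessible and co-accessible with nonzero weight. -/
def NAut.Trim {A : Type} (T : NAut A) : Prop :=
  ∀ q : T.Q, (∃ u, 1 ≤ vecMat T.α (T.μW u) q) ∧ (∃ v, 1 ≤ matVec (T.μW v) T.β q)

/-- A heavy cycle on state `q`: a nonempty word `v` with `μ(v)(q,q) ≥ 2`. -/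
def NAut.HeavyCycle {A : Type} (T : NAut A) (q : T.Q) (v : List A) : Prop :=
  v ≠ [] ∧ 2 ≤ T.μW v q q

/-- A barbell from `q` to `q' ≠ q`: a nonempty word `v` with `μ(v)(q,q) ≥ 1`,
`μ(v)(q,q') ≥ 1` and `μ(v)(q',q') ≥ 1`. -/
def NAut.Barbell {A : Type} (T : NAut A) (q q' : T.Q) (v : List A) : Prop :=
  q ≠ q' ∧ v ≠ [] ∧ 1 ≤ T.μW v q q ∧ 1 ≤ T.μW v q q' ∧ 1 ≤ T.μW v q' q'

/-- Edge of the barbell graph `𝔊`. -/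
def NAut.GEdge {A : Type} (T : NAut A) (q1 q2 : T.Q) : Prop :=
  ∃ q q' v, T.Barbell q q' v ∧ (∃ w, 1 ≤ T.μW w q1 q) ∧ (∃ w', 1 ≤ T.μW w' q' q2)

/-- `PathLen G q n`: there is a directed path of length `n` (counting edges) in the
graph `G` ending in `q`. -/
inductive PathLen {Q : Type} (G : Q → Q → Prop) : Q → ℕ → Prop
  | zero (q : Q) : PathLen G q 0
  | succ {p q : Q} {n : ℕ} : PathLen G p n → G p q → PathLen G q (n + 1)

/-- The height of `q` in the graph `G` is `n`: the maximal length of a directed path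
ending in `q` is `n`. -/
def HeightIs {Q : Type} (G : Q → Q → Prop) (q : Q) (n : ℕ) : Prop :=
  PathLen G q n ∧ ∀ m, PathLen G q m → m ≤ n

/-! ### Statement-specific predicates -/

/-- Case (1) of the trichotomy: `|f|` has exponential growth and `f` is not computable
with `k` marbles for any `k`. -/
def MarbleCase1 {A B : Type} (f : List A → List B) : Prop :=
  ExpGrowth (fun w => (f w).length) ∧ ∀ k : ℕ, ¬ ComputableKMarble f k

/-- Case (2) of the trichotomy: `|f|` has `(k+1)`-polynomial growth for some `k`, `f` is
computable with `k` marbles, and `k` is the least possible number of marbles. -/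
def MarbleCase2 {A B : Type} (f : List A → List B) : Prop :=
  ∃ k : ℕ, PolyGrowth (fun w => (f w).length) (k + 1) ∧ ComputableKMarble f k ∧
    ∀ j : ℕ, ComputableKMarble f j → k ≤ j

/-- Case (3) of the trichotomy: `|f|` has `0`-polynomial growth and `f` is computable
with `0` marbles. -/
def MarbleCase3 {A B : Type} (f : List A → List B) : Prop :=
  PolyGrowth (fun w => (f w).length) 0 ∧ ComputableKMarble f 0

/-- The second alternative of Lemma `lem:graph`: `g` has `k`-polynomial growth for some
`k ≥ 0` and the states admit a partition `S_0, …, S_k` satisfying (a), (b), (c). -/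
def NAutPolyCase {A : Type} (T : NAut A) : Prop :=
  ∃ k : ℕ, PolyGrowth T.g k ∧
    ∃ S : T.Q → Fin (k + 1),
      (∀ q q' : T.Q, (∃ w, 1 ≤ T.μW w q q') → S q ≤ S q') ∧
      (∃ Bd : ℕ, ∀ q q' : T.Q, S q = S q' → ∀ w, T.μW w q q' ≤ Bd) ∧
      (∀ q : T.Q, ∃ C : ℕ, ∀ w, vecMat T.α (T.μW w) q ≤ C * w.length ^ (S q : ℕ) + C)

namespace Stmt19Aux

variable {A B : Type}

/-- Configurations of a marble transducer. -/
abbrev Cfg (T : MarbleT A B) : Type := T.Q × ℕ × List (T.C × ℕ)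

/-- A single step of the marble transducer. -/
def OneStep (T : MarbleT A B) (w : List A) (c : Cfg T) (v : List B) (c' : Cfg T) : Prop :=
  (∃ q', T.trans c.1 (tapeAt w c.2.1) (marbleAt c.2.1 c.2.2) = some ((q', MAct.left), v)
      ∧ 1 ≤ c.2.1 ∧ c' = (q', c.2.1 - 1, c.2.2)) ∨
  (marbleAt c.2.1 c.2.2 = none ∧
    ∃ q', T.trans c.1 (tapeAt w c.2.1) none = some ((q', MAct.right), v)
      ∧ c.2.1 ≤ w.length ∧ c' = (q', c.2.1 + 1, c.2.2)) ∨
  (∃ q' cc π', c.2.2 = (cc, c.2.1) :: π'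
      ∧ T.trans c.1 (tapeAt w c.2.1) (some cc) = some ((q', MAct.lift), v)
      ∧ c' = (q', c.2.1, π')) ∨
  (marbleAt c.2.1 c.2.2 = none ∧
    ∃ q' cc, T.trans c.1 (tapeAt w c.2.1) none = some ((q', MAct.drop cc), v)
      ∧ c' = (q', c.2.1, (cc, c.2.1) :: c.2.2))

theorem OneStep.steps {T : MarbleT A B} {w : List A} {c : Cfg T} {v : List B} {c' : Cfg T}
    (h : OneStep T w c v c') : MarbleT.Steps T w c v c' := by
  obtain ⟨q, m, π⟩ := c
  simp only [OneStep] at h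
  rcases h with ⟨q', ht, hm, rfl⟩ | ⟨hn, q', ht, hm, rfl⟩ | ⟨q', cc, π', rfl, ht, rfl⟩ |
    ⟨hn, q', cc, ht, rfl⟩
  · simpa using MarbleT.Steps.stepL ht hm (MarbleT.Steps.refl _)
  · simpa using MarbleT.Steps.stepR hn ht hm (MarbleT.Steps.refl _)
  · simpa using MarbleT.Steps.stepLift ht (MarbleT.Steps.refl _)
  · simpa using MarbleT.Steps.stepDrop hn ht (MarbleT.Steps.refl _)

theorem steps_append {T : MarbleT A B} {w : List A} {c c' : Cfg T} {u : List B}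
    (h : MarbleT.Steps T w c u c') :
    ∀ {u' : List B} {c'' : Cfg T}, MarbleT.Steps T w c' u' c'' →
      MarbleT.Steps T w c (u ++ u') c'' := by
  induction h with
  | refl c => intro u' c'' h'; simpa using h'
  | stepL h1 h2 _ ih =>
      intro u' c'' h'; rw [List.append_assoc]; exact MarbleT.Steps.stepL h1 h2 (ih h')
  | stepR h0 h1 h2 _ ih =>
      intro u' c'' h'; rw [List.append_assoc]; exact MarbleT.Steps.stepR h0 h1 h2 (ih h')
  | stepLift h1 _ ih =>
      intro u' c'' h'; rw [List.append_assoc]; exact MarbleT.Steps.stepLift h1 (ih h')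
  | stepDrop h0 h1 _ ih =>
      intro u' c'' h'; rw [List.append_assoc]; exact MarbleT.Steps.stepDrop h0 h1 (ih h')

/-- A trace: list of (source configuration, output) pairs of consecutive steps. -/
def TraceList (T : MarbleT A B) (w : List A) : Cfg T → List (Cfg T × List B) → Cfg T → Prop
  | c, [], cf => c = cf
  | c, p :: tr, cf => p.1 = c ∧ ∃ c', OneStep T w c p.2 c' ∧ TraceList T w c' tr cf

def outs {γ : Type} (tr : List (γ × List B)) : List B :=
  (tr.map fun p => p.2).flatten

@[simp] theorem outs_nil {γ : Type} : outs ([] : List (γ × List B)) = [] := rfl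

@[simp] theorem outs_cons {γ : Type} (p : γ × List B) (tr : List (γ × List B)) :
    outs (p :: tr) = p.2 ++ outs tr := by simp [outs]

@[simp] theorem outs_append {γ : Type} (s t : List (γ × List B)) :
    outs (s ++ t) = outs s ++ outs t := by simp [outs]

theorem outs_length {γ : Type} (tr : List (γ × List B)) :
    (outs tr).length = (tr.map fun p => p.2.length).sum := by
  simp [outs, List.length_flatten, List.map_map, Function.comp_def]

theorem steps_trace {T : MarbleT A B} {w : List A} {c cf : Cfg T} {v : List B}
    (h : MarbleT.Steps T w c v cf) : ∃ tr, TraceList T w c tr cf ∧ v = outs tr := by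
  induction h with
  | refl c => exact ⟨[], rfl, rfl⟩
  | @stepL q m π q' v u cf h1 h2 _ ih =>
      obtain ⟨tr, htr, rfl⟩ := ih
      exact ⟨((q, m, π), v) :: tr, ⟨rfl, _, Or.inl ⟨q', h1, h2, rfl⟩, htr⟩, by simp⟩
  | @stepR q m π q' v u cf h0 h1 h2 _ ih =>
      obtain ⟨tr, htr, rfl⟩ := ih
      exact ⟨((q, m, π), v) :: tr, ⟨rfl, _, Or.inr (Or.inl ⟨h0, q', h1, h2, rfl⟩), htr⟩, by simp⟩
  | @stepLift q m π q' cc v u cf h1 _ ih =>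
      obtain ⟨tr, htr, rfl⟩ := ih
      exact ⟨((q, m, (cc, m) :: π), v) :: tr,
        ⟨rfl, _, Or.inr (Or.inr (Or.inl ⟨q', cc, π, rfl, h1, rfl⟩)), htr⟩, by simp⟩
  | @stepDrop q m π q' cc v u cf h0 h1 _ ih =>
      obtain ⟨tr, htr, rfl⟩ := ih
      exact ⟨((q, m, π), v) :: tr,
        ⟨rfl, _, Or.inr (Or.inr (Or.inr ⟨h0, q', cc, h1, rfl⟩)), htr⟩, by simp⟩

theorem trace_split {T : MarbleT A B} {w : List A} :
    ∀ {t1 t2 : List (Cfg T × List B)} {c cf : Cfg T}, TraceList T w c (t1 ++ t2) cf →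
      ∃ c', TraceList T w c t1 c' ∧ TraceList T w c' t2 cf := by
  intro t1
  induction t1 with
  | nil => exact fun h => ⟨_, rfl, h⟩
  | cons p t ih =>
      intro t2 c cf h
      obtain ⟨hp, c', hs, htr⟩ := h
      obtain ⟨c'', h1, h2⟩ := ih htr
      exact ⟨c'', ⟨hp, c', hs, h1⟩, h2⟩

theorem trace_steps {T : MarbleT A B} {w : List A} :
    ∀ {tr : List (Cfg T × List B)} {c cf : Cfg T}, TraceList T w c tr cf →
      MarbleT.Steps T w c (outs tr) cf := by
  intro tr
  induction tr with
  | nil => intro c cf h; subst h; exact MarbleT.Steps.refl c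
  | cons p t ih =>
      intro c cf h
      obtain ⟨hp, c', hs, htr⟩ := h
      simpa using steps_append hs.steps (ih htr)

/-! ### bound on the output of a single step -/

def decode : Option (Option A) → TapeSym A
  | none => TapeSym.lend
  | some none => TapeSym.rend
  | some (some a) => TapeSym.letter a

theorem decode_surj (s : TapeSym A) : ∃ x, decode x = s := by
  cases s with
  | lend => exact ⟨none, rfl⟩
  | rend => exact ⟨some none, rfl⟩
  | letter a => exact ⟨some (some a), rfl⟩

noncomputable def Mb (T : MarbleT A B) [Fintype A] : ℕ :=
  Finset.univ.sup fun x : T.Q × Option (Option A) × Option T.C =>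
    ((T.trans x.1 (decode x.2.1) x.2.2).map fun p => p.2.length).getD 0

theorem trans_len_le {T : MarbleT A B} [Fintype A] {q : T.Q} {s : TapeSym A} {oc : Option T.C}
    {pr : T.Q × MAct T.C} {v : List B} (h : T.trans q s oc = some (pr, v)) :
    v.length ≤ Mb T := by
  obtain ⟨x, hx⟩ := decode_surj s
  have := Finset.le_sup (f := fun x : T.Q × Option (Option A) × Option T.C =>
    ((T.trans x.1 (decode x.2.1) x.2.2).map fun p => p.2.length).getD 0)
    (Finset.mem_univ (q, x, oc))
  simp [hx, h] at this; exact this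

theorem onestep_len_le {T : MarbleT A B} [Fintype A] {w : List A} {c : Cfg T} {v : List B}
    {c' : Cfg T} (h : OneStep T w c v c') : v.length ≤ Mb T := by
  rcases h with ⟨q', ht, _⟩ | ⟨_, q', ht, _⟩ | ⟨q', cc, π', _, ht, _⟩ | ⟨_, q', cc, ht, _⟩ <;>
    exact trans_len_le ht

theorem trace_out {T : MarbleT A B} [Fintype A] {w : List A} :
    ∀ {tr : List (Cfg T × List B)} {c cf : Cfg T}, TraceList T w c tr cf →
      ∀ p ∈ tr, p.2.length ≤ Mb T := by
  intro tr
  induction tr with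
  | nil => intro c cf _ p hp; simp at hp
  | cons a t ih =>
      intro c cf h p hp
      obtain ⟨ha, c', hs, htr⟩ := h
      rcases List.mem_cons.mp hp with rfl | hp
      · exact onestep_len_le hs
      · exact ih htr p hp

/-! ### invariant along runs -/

def Inv (T : MarbleT A B) (w : List A) (c : Cfg T) : Prop :=
  (∃ u, MarbleT.Steps T w (T.q0, 0, []) u c) ∧ c.2.1 ≤ w.length + 1 ∧
    ∀ p ∈ c.2.2, p.2 ≤ w.length + 1

theorem inv_step {T : MarbleT A B} {w : List A} {c : Cfg T} {v : List B} {c' : Cfg T}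
    (hc : Inv T w c) (h : OneStep T w c v c') : Inv T w c' := by
  obtain ⟨⟨u, hu⟩, hm, hπ⟩ := hc
  have hreach : ∃ u', MarbleT.Steps T w (T.q0, 0, []) u' c' := ⟨u ++ v, steps_append hu h.steps⟩
  obtain ⟨q, m, π⟩ := c
  rcases h with ⟨q', ht, hm1, rfl⟩ | ⟨hn, q', ht, hm1, rfl⟩ | ⟨q', cc, π', heq, ht, rfl⟩ |
    ⟨hn, q', cc, ht, rfl⟩
  · exact ⟨hreach, by simp at hm ⊢; omega, hπ⟩
  · exact ⟨hreach, by simp at hm1 ⊢; omega, hπ⟩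
  · refine ⟨hreach, hm, fun p hp => hπ p ?_⟩
    simp only at heq
    rw [heq]
    exact List.mem_cons_of_mem _ hp
  · refine ⟨hreach, hm, ?_⟩
    intro p hp
    rcases List.mem_cons.mp hp with rfl | hp
    · simpa using hm
    · exact hπ p hp

def Good (T : MarbleT A B) (w : List A) (k : ℕ) (c : Cfg T) : Prop :=
  c.2.1 ≤ w.length + 1 ∧ c.2.2.length ≤ k ∧ ∀ p ∈ c.2.2, p.2 ≤ w.length + 1

theorem inv_good {T : MarbleT A B} {w : List A} {k : ℕ} (hk : T.IsKMarble k) {c : Cfg T}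
    (hc : Inv T w c) : Good T w k c := by
  obtain ⟨⟨u, hu⟩, h1, h2⟩ := hc
  exact ⟨h1, hk w u c hu, h2⟩

theorem trace_good {T : MarbleT A B} {w : List A} {k : ℕ} (hk : T.IsKMarble k) :
    ∀ {tr : List (Cfg T × List B)} {c cf : Cfg T}, TraceList T w c tr cf → Inv T w c →
      ∀ p ∈ tr, Good T w k p.1 := by
  intro tr
  induction tr with
  | nil => intro c cf _ _ p hp; simp at hp
  | cons a t ih =>
      intro c cf h hc p hp
      obtain ⟨ha, c', hs, htr⟩ := h
      rcases List.mem_cons.mp hp with rfl | hp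
      · rw [ha]; exact inv_good hk hc
      · exact ih htr (inv_step hc hs) p hp

/-! ### encoding of good configurations into a finite type -/

def enc (T : MarbleT A B) (n k : ℕ) (c : Cfg T) :
    T.Q × Fin (n + 2) × (Fin k → Option (T.C × Fin (n + 2))) :=
  ⟨c.1, ⟨min c.2.1 (n + 1), by omega⟩,
    fun i => (c.2.2[(i : ℕ)]?).map fun p => (p.1, ⟨min p.2 (n + 1), by omega⟩)⟩

theorem enc_inj {T : MarbleT A B} {w : List A} {k : ℕ} {c c' : Cfg T}
    (hc : Good T w k c) (hc' : Good T w k c')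
    (h : enc T w.length k c = enc T w.length k c') : c = c' := by
  obtain ⟨q, m, π⟩ := c; obtain ⟨q', m', π'⟩ := c'
  obtain ⟨hm, hl, hπ⟩ := hc; obtain ⟨hm', hl', hπ'⟩ := hc'
  simp only at hm hl hπ hm' hl' hπ'
  simp only [enc, Prod.mk.injEq, Fin.mk.injEq] at h
  obtain ⟨hq, hmin, hfun⟩ := h
  subst hq
  rw [Nat.min_eq_left hm, Nat.min_eq_left hm'] at hmin
  subst hmin
  have hππ : π = π' := by
    apply List.ext_getElem?
    intro i
    by_cases hik : i < k
    · have hf := congrFun hfun ⟨i, hik⟩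
      simp only at hf
      cases h1 : π[i]? with
      | none =>
          rw [h1, Option.map_none] at hf
          exact (Option.map_eq_none_iff.mp hf.symm).symm
      | some e =>
          rw [h1, Option.map_some] at hf
          obtain ⟨e', h2, hfe⟩ := Option.map_eq_some_iff.mp hf.symm
          have he : e ∈ π := List.mem_of_getElem? h1
          have he' : e' ∈ π' := List.mem_of_getElem? h2
          simp only [Prod.mk.injEq, Fin.mk.injEq] at hfe
          obtain ⟨hfe1, hfe2⟩ := hfe
          rw [Nat.min_eq_left (hπ' e' he'), Nat.min_eq_left (hπ e he)] at hfe2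
          rw [h2]
          exact congrArg some (Prod.ext hfe1 hfe2).symm
    · rw [List.getElem?_eq_none (by omega : π.length ≤ i),
        List.getElem?_eq_none (by omega : π'.length ≤ i)]
  rw [hππ]

/-! ### list lemmas -/

theorem sum_len_filter {γ : Type} (l : List (γ × List B)) :
    (l.map fun p => p.2.length).sum =
      ((l.filter fun p => !p.2.isEmpty).map fun p => p.2.length).sum := by
  induction l with
  | nil => rfl
  | cons a t ih =>
      by_cases h : a.2.isEmpty
      · have ha : a.2 = [] := List.isEmpty_iff.mp h
        simp [List.filter_cons, h, ha, ih]
      · simp [List.filter_cons, h, ih]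

theorem pair_sublist_split {α : Type} {a b : α} :
    ∀ {l : List α}, [a, b].Sublist l → ∃ l1 l2 l3, l = l1 ++ a :: l2 ++ b :: l3 := by
  intro l
  induction l with
  | nil => intro h; exact absurd (h.length_le) (by simp)
  | cons x l ih =>
      intro h
      cases h with
      | cons _ h' =>
          obtain ⟨l1, l2, l3, rfl⟩ := ih h'
          exact ⟨x :: l1, l2, l3, rfl⟩
      | cons_cons _ h' =>
          have hb : b ∈ l := h'.subset (by simp)
          obtain ⟨s, t, rfl⟩ := List.append_of_mem hb
          exact ⟨[], s, t, rfl⟩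

/-! ### main bound on runs -/

theorem run_bound {T : MarbleT A B} [Fintype A] {w : List A} {k : ℕ} (hk : T.IsKMarble k)
    (cf : Cfg T) (v : List B) (h : MarbleT.Steps T w (T.q0, 0, []) v cf) :
    ∃ v', MarbleT.Steps T w (T.q0, 0, []) v' cf ∧
      v'.length ≤ Mb T *
        Fintype.card (T.Q × Fin (w.length + 2) × (Fin k → Option (T.C × Fin (w.length + 2)))) := by
  set N := Fintype.card
    (T.Q × Fin (w.length + 2) × (Fin k → Option (T.C × Fin (w.length + 2)))) with hN
  have H : ∀ (L : ℕ) (v : List B), v.length ≤ L →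
      MarbleT.Steps T w (T.q0, 0, []) v cf →
      ∃ v', MarbleT.Steps T w (T.q0, 0, []) v' cf ∧ v'.length ≤ Mb T * N := by
    intro L
    induction L with
    | zero => intro v hv h; exact ⟨v, h, le_trans hv (Nat.zero_le _)⟩
    | succ L ih =>
        intro v hv h
        obtain ⟨tr, htr, rfl⟩ := steps_trace h
        set tr' := tr.filter (fun p => !p.2.isEmpty) with htr'def
        by_cases hle : tr'.length ≤ N
        · refine ⟨outs tr, h, ?_⟩
          rw [outs_length, sum_len_filter]
          have h2 : ((tr'.map fun p => p.2.length)).sum ≤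
              (tr'.map fun p => p.2.length).length • Mb T := by
            apply List.sum_le_card_nsmul
            intro x hx
            obtain ⟨p, hp, rfl⟩ := List.mem_map.mp hx
            exact trace_out htr p (List.mem_of_mem_filter hp)
          rw [List.length_map] at h2
          calc ((tr'.map fun p => p.2.length)).sum ≤ tr'.length • Mb T := h2
            _ = tr'.length * Mb T := by simp [smul_eq_mul]
            _ ≤ N * Mb T := Nat.mul_le_mul_right _ hle
            _ = Mb T * N := Nat.mul_comm _ _
        · push_neg at hle
          have hgood : ∀ p ∈ tr, Good T w k p.1 :=
            trace_good hk htr ⟨⟨[], MarbleT.Steps.refl _⟩, by exact Nat.zero_le _, by simp⟩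
          have hnd : ¬ (tr'.map fun p => enc T w.length k p.1).Nodup := by
            intro hnd
            have := hnd.length_le_card
            rw [List.length_map] at this
            omega
          rw [List.nodup_iff_sublist] at hnd
          push_neg at hnd
          obtain ⟨x, hx⟩ := hnd
          obtain ⟨l', hl', hmap⟩ := List.sublist_map_iff.mp hx
          have hlen2 : l'.length = 2 := by
            have := congrArg List.length hmap
            simpa using this.symm
          obtain ⟨a, b, rfl⟩ : ∃ a b, l' = [a, b] := by
            rcases l' with _ | ⟨a, _ | ⟨b, _ | ⟨c, l''⟩⟩⟩ <;> simp_all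
          simp only [List.map_cons, List.map_nil, List.cons.injEq] at hmap
          obtain ⟨hxa, hxb, -⟩ := hmap
          have hatr' : a ∈ tr' := hl'.subset (by simp)
          have hbtr' : b ∈ tr' := hl'.subset (by simp)
          have hane : a.2 ≠ [] := by
            have := (List.mem_filter.mp (htr'def ▸ hatr')).2
            simpa using this
          have habtr : [a, b].Sublist tr := hl'.trans (htr'def ▸ (List.filter_sublist (l := tr)))
          have hatr : a ∈ tr := habtr.subset (by simp)
          have hbtr : b ∈ tr := habtr.subset (by simp)
          have hab : a.1 = b.1 :=
            enc_inj (hgood a hatr) (hgood b hbtr) (by rw [← hxa, ← hxb])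
          obtain ⟨l1, l2, l3, htreq⟩ := pair_sublist_split habtr
          rw [htreq] at htr
          obtain ⟨c3, hA, hB⟩ := trace_split htr
          obtain ⟨cA, h1, h2⟩ := trace_split hA
          obtain ⟨ha1, c2, hs1, h3⟩ := h2
          obtain ⟨hb1, c4, hs2, h6⟩ := hB
          have hc3A : c3 = cA := by rw [← hb1, ← hab, ha1]
          rw [hc3A] at hs2
          have run2 : MarbleT.Steps T w (T.q0, 0, []) (outs l1 ++ (b.2 ++ outs l3)) cf :=
            steps_append (trace_steps h1) (steps_append hs2.steps (trace_steps h6))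
          have hshort : (outs l1 ++ (b.2 ++ outs l3)).length ≤ L := by
            have h0 : 0 < a.2.length := List.length_pos_iff.mpr hane
            rw [htreq] at hv
            simp only [outs_append, outs_cons, List.length_append] at hv ⊢
            omega
          exact ih _ hshort run2
  exact H v.length v le_rfl h

end Stmt19Aux

theorem stmt19 {A B : Type} [Fintype A] [Fintype B] (T : MarbleT A B) (k : ℕ)
    (hk : T.IsKMarble k) (f : List A → Option (List B)) (hf : T.Computes f) :
    ∃ C : ℕ, ∀ w v, f w = some v → v.length ≤ C * w.length ^ (k + 1) + C := by
  classical
  refine ⟨Stmt19Aux.Mb T *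
    (Fintype.card T.Q * (Fintype.card T.C + 1) ^ k * 4 ^ (k + 1)), ?_⟩
  intro w v hfw
  obtain ⟨q, hq, hrun⟩ := (hf w v).mp hfw
  obtain ⟨v', hrun', hlen⟩ :=
    Stmt19Aux.run_bound hk (q, w.length + 1, ([] : List (T.C × ℕ))) v hrun
  have hv' : f w = some v' := (hf w v').mpr ⟨q, hq, hrun'⟩
  rw [hfw] at hv'
  obtain rfl : v = v' := Option.some.inj hv'
  set n := w.length with hn
  have hcard : Fintype.card (T.Q × Fin (n + 2) × (Fin k → Option (T.C × Fin (n + 2))))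
      ≤ Fintype.card T.Q * (Fintype.card T.C + 1) ^ k * (n + 2) ^ (k + 1) := by
    rw [Fintype.card_prod, Fintype.card_prod, Fintype.card_fun, Fintype.card_option,
      Fintype.card_prod, Fintype.card_fin, Fintype.card_fin]
    have h1 : Fintype.card T.C * (n + 2) + 1 ≤ (Fintype.card T.C + 1) * (n + 2) := by
      have : (Fintype.card T.C + 1) * (n + 2) = Fintype.card T.C * (n + 2) + (n + 2) := by ring
      omega
    calc Fintype.card T.Q * ((n + 2) * (Fintype.card T.C * (n + 2) + 1) ^ k)
        ≤ Fintype.card T.Q * ((n + 2) * ((Fintype.card T.C + 1) * (n + 2)) ^ k) := by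
          exact Nat.mul_le_mul_left _ (Nat.mul_le_mul_left _ (Nat.pow_le_pow_left h1 k))
      _ = Fintype.card T.Q * ((n + 2) * ((Fintype.card T.C + 1) ^ k * (n + 2) ^ k)) := by
          rw [Nat.mul_pow]
      _ = Fintype.card T.Q * (Fintype.card T.C + 1) ^ k * (n + 2) ^ (k + 1) := by ring
  have hpow : (n + 2) ^ (k + 1) ≤ 4 ^ (k + 1) * (n ^ (k + 1) + 1) := by
    rcases Nat.eq_zero_or_pos n with hzero | hpos
    · rw [hzero]
      calc (0 + 2) ^ (k + 1) ≤ 4 ^ (k + 1) := Nat.pow_le_pow_left (by norm_num) _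
        _ ≤ 4 ^ (k + 1) * (0 ^ (k + 1) + 1) := by
            have : (1 : ℕ) ≤ 0 ^ (k + 1) + 1 := by omega
            calc (4:ℕ) ^ (k + 1) = 4 ^ (k + 1) * 1 := by ring
              _ ≤ 4 ^ (k + 1) * (0 ^ (k + 1) + 1) := Nat.mul_le_mul_left _ this
    · have h4 : n + 2 ≤ 4 * n := by omega
      calc (n + 2) ^ (k + 1) ≤ (4 * n) ^ (k + 1) := Nat.pow_le_pow_left h4 _
        _ = 4 ^ (k + 1) * n ^ (k + 1) := by rw [Nat.mul_pow]
        _ ≤ 4 ^ (k + 1) * (n ^ (k + 1) + 1) := Nat.mul_le_mul_left _ (Nat.le_succ _)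
  calc v.length ≤ Stmt19Aux.Mb T *
        Fintype.card (T.Q × Fin (n + 2) × (Fin k → Option (T.C × Fin (n + 2)))) := hlen
    _ ≤ Stmt19Aux.Mb T *
        (Fintype.card T.Q * (Fintype.card T.C + 1) ^ k * (n + 2) ^ (k + 1)) :=
          Nat.mul_le_mul_left _ hcard
    _ ≤ Stmt19Aux.Mb T *
        (Fintype.card T.Q * (Fintype.card T.C + 1) ^ k * (4 ^ (k + 1) * (n ^ (k + 1) + 1))) := by
          exact Nat.mul_le_mul_left _ (Nat.mul_le_mul_left _ hpow)
    _ = Stmt19Aux.Mb T * (Fintype.card T.Q * (Fintype.card T.C + 1) ^ k * 4 ^ (k + 1)) *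
          n ^ (k + 1) +
        Stmt19Aux.Mb T * (Fintype.card T.Q * (Fintype.card T.C + 1) ^ k * 4 ^ (k + 1)) := by ring
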